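/- arXiv:1703.05212 — 3 statements merged into one kernel-verified Lean document; each statement's English description precedes it below -/
import Mathlib

section
/- Let X be a locally compact separable metric space, f : X → ℝ a continuous function, r ∈ ℕ, g : X → ℝ^r a continuous map, and c ∈ ℝ a real number that is not a local extremum of f restricted to the set fat_g X. Then for every open subset B ⊆ X, every compact subset K ⊆ B, and each a ∈ {0,1}, the set g(K ∩ U^∂(f,c)) \ g(B ∩ U^a(f,c)) is nowhere dense in ℝ^r. -/
open TopologicalSpace

/-- `c` is a local maximum (resp. minimum) of `f` restricted to `A` if there is an open set
`V` such that `c` is the maximum (resp. minimum) value of `f` on `V ∩ A`, attained there;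
a local extremum is a local maximum or a local minimum. -/
def IsLocalExtremumOn {X : Type*} [TopologicalSpace X] (f : X → ℝ) (A : Set X) (c : ℝ) :
    Prop :=
  (∃ V : Set X, IsOpen V ∧ c ∈ f '' (V ∩ A) ∧ ∀ y ∈ V ∩ A, f y ≤ c) ∨
  (∃ V : Set X, IsOpen V ∧ c ∈ f '' (V ∩ A) ∧ ∀ y ∈ V ∩ A, c ≤ f y)

/-- `U^0(f,c) = {x | f x < c}` and `U^1(f,c) = {x | f x > c}`. -/
def Uset {X : Type*} (f : X → ℝ) (c : ℝ) : Bool → Set X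
  | false => {x | f x < c}
  | true => {x | c < f x}

/-- The set of fat points of `A ⊆ X` with respect to `g : X → ℝ^r`. -/
def fatPoints {X : Type*} [TopologicalSpace X] {r : ℕ}
    (g : X → EuclideanSpace ℝ (Fin r)) (A : Set X) : Set X :=
  {x ∈ A | ∀ V ∈ nhds x, (interior (g '' (A ∩ V))).Nonempty}

lemma uset_isOpen {X : Type*} [TopologicalSpace X] (f : X → ℝ) (hf : Continuous f)
    (c : ℝ) (a : Bool) : IsOpen (Uset f c a) := by
  cases a
  · exact isOpen_lt hf continuous_const
  · exact isOpen_lt continuous_const hf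

lemma interior_biUnion_finset_empty {α ι : Type*} [TopologicalSpace α] (t : Finset ι)
    (u : ι → Set α) (hcl : ∀ i ∈ t, IsClosed (u i)) (he : ∀ i ∈ t, interior (u i) = ∅) :
    interior (⋃ i ∈ t, u i) = ∅ := by
  classical
  induction t using Finset.induction with
  | empty => simp
  | @insert x s hxs ih =>
    rw [Finset.set_biUnion_insert,
      interior_union_isClosed_of_interior_empty (hcl x (by simp))
        (ih (fun i hi => hcl i (by simp [hi])) (fun i hi => he i (by simp [hi]))),
      he x (by simp)]

/-- If `c` is not a local extremum of `f` restricted to `fat_g X`, then for every open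
`B ⊆ X`, every compact `K ⊆ B` and each `a ∈ {0,1}`, the set
`g(K ∩ U^∂(f,c)) \ g(B ∩ U^a(f,c))` is nowhere dense in `ℝ^r`. -/
theorem image_compact_bd_diff_nowhereDense (X : Type*) [MetricSpace X]
    [SeparableSpace X] [LocallyCompactSpace X]
    (f : X → ℝ) (hf : Continuous f) (r : ℕ)
    (g : X → EuclideanSpace ℝ (Fin r)) (hg : Continuous g) (c : ℝ)
    (hc : ¬ IsLocalExtremumOn f (fatPoints g Set.univ) c) :
    ∀ B : Set X, IsOpen B → ∀ K : Set X, IsCompact K → K ⊆ B → ∀ a : Bool,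
      IsNowhereDense (g '' (K ∩ f ⁻¹' {c}) \ g '' (B ∩ Uset f c a)) := by
  intro B hB K hK hKB a
  set F := fatPoints g Set.univ with hF
  set P := g '' (B ∩ Uset f c a) with hP
  set S := g '' (K ∩ f ⁻¹' {c}) \ P with hSdef
  rw [IsNowhereDense]
  by_contra hne
  rw [← Ne, ← Set.nonempty_iff_ne_empty] at hne
  obtain ⟨z, hz⟩ := hne
  set W := interior (closure S) with hWdef
  have hWopen : IsOpen W := isOpen_interior
  obtain ⟨δ, hδ, hballW⟩ := Metric.isOpen_iff.mp hWopen z hz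
  have hcbW : Metric.closedBall z (δ/2) ⊆ W :=
    (Metric.closedBall_subset_ball (by linarith)).trans hballW
  set T := g '' (K ∩ f ⁻¹' {c}) with hT
  have hTc : IsCompact T := (hK.inter_right ((isClosed_singleton).preimage hf)).image hg
  have hST : closure S ⊆ T := closure_minimal Set.diff_subset hTc.isClosed
  set Q := K ∩ f ⁻¹' {c} ∩ g ⁻¹' (Metric.closedBall z (δ/2)) with hQ
  have hQc : IsCompact Q :=
    (hK.inter_right ((isClosed_singleton).preimage hf)).inter_right
      (Metric.isClosed_closedBall.preimage hg)
  have hQim : Metric.closedBall z (δ/2) ⊆ g '' Q := by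
    intro w hw
    obtain ⟨x, hx, rfl⟩ := hST (interior_subset (hcbW hw))
    exact ⟨x, ⟨hx, hw⟩, rfl⟩
  -- Step 1: Q contains a fat point.
  have hfat : ∃ x ∈ Q, x ∈ F := by
    by_contra hno
    push_neg at hno
    have key : ∀ x ∈ Q, ∃ C : Set X, C ∈ nhds x ∧ IsClosed (g '' C) ∧
        interior (g '' C) = ∅ := by
      intro x hx
      have hxF := hno x hx
      have : ∃ V ∈ nhds x, ¬ (interior (g '' (Set.univ ∩ V))).Nonempty := by
        by_contra h
        push_neg at h
        exact hxF ⟨Set.mem_univ x, h⟩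
      obtain ⟨V, hV, hVe⟩ := this
      rw [Set.not_nonempty_iff_eq_empty, Set.univ_inter] at hVe
      obtain ⟨C, hCn, hCV, hCc⟩ := local_compact_nhds hV
      refine ⟨C, hCn, (hCc.image hg).isClosed, ?_⟩
      have h1 : interior (g '' C) ⊆ interior (g '' V) :=
        interior_mono (Set.image_mono hCV)
      rw [hVe] at h1
      exact Set.eq_empty_of_subset_empty h1
    choose C hCn hCcl hCe using key
    obtain ⟨t, hcov⟩ := hQc.elim_nhds_subcover' (fun x hx => C x hx) (fun x hx => hCn x hx)
    have hint : interior (⋃ x ∈ t, g '' C x.1 x.2) = ∅ :=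
      interior_biUnion_finset_empty t (fun x => g '' C x.1 x.2)
        (fun i _ => hCcl i.1 i.2) (fun i _ => hCe i.1 i.2)
    have hsub : Metric.ball z (δ/2) ⊆ interior (⋃ x ∈ t, g '' C x.1 x.2) := by
      apply interior_maximal _ Metric.isOpen_ball
      intro w hw
      obtain ⟨q, hq, rfl⟩ := hQim (Metric.ball_subset_closedBall hw)
      obtain ⟨x, hxt, hqx⟩ := Set.mem_iUnion₂.mp (hcov hq)
      exact Set.mem_biUnion hxt ⟨q, hqx, rfl⟩
    rw [hint] at hsub
    exact hsub (Metric.mem_ball_self (by linarith)) 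
  obtain ⟨x, hxQ, hxF⟩ := hfat
  -- Step 2: use that c is not a local extremum at x.
  obtain ⟨⟨hxK, hxc⟩, hxb⟩ := hxQ
  have hgxW : g x ∈ W := hcbW hxb
  obtain ⟨ε, hε, hballε⟩ := Metric.isOpen_iff.mp hWopen _ hgxW
  set V : Set X := B ∩ g ⁻¹' (Metric.ball (g x) (ε/2)) with hV
  have hVopen : IsOpen V := hB.inter ((Metric.isOpen_ball).preimage hg)
  have hxV : x ∈ V := ⟨hKB hxK, by simpa [Metric.mem_ball] using half_pos hε⟩
  have hcV : c ∈ f '' (V ∩ F) := ⟨x, ⟨hxV, hxF⟩, hxc⟩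
  rw [IsLocalExtremumOn] at hc
  push_neg at hc
  obtain ⟨hc1, hc2⟩ := hc
  -- get a point y ∈ V ∩ F with f y on the `a` side of c
  have hy : ∃ y ∈ V ∩ F, y ∈ Uset f c a := by
    cases a
    · obtain ⟨y, hy, hyc⟩ := hc2 V hVopen hcV
      exact ⟨y, hy, by simpa [Uset] using hyc⟩
    · obtain ⟨y, hy, hyc⟩ := hc1 V hVopen hcV
      exact ⟨y, hy, by simpa [Uset] using hyc⟩
  obtain ⟨y, ⟨⟨hyB, hygx⟩, hyF⟩, hyU⟩ := hy
  set V' : Set X := (B ∩ Uset f c a) ∩ g ⁻¹' (Metric.ball (g x) ε) with hV'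
  have hV'open : IsOpen V' := ((hB.inter (uset_isOpen f hf c a)).inter
    ((Metric.isOpen_ball).preimage hg))
  have hyV' : y ∈ V' := by
    refine ⟨⟨hyB, hyU⟩, ?_⟩
    have : dist (g y) (g x) < ε/2 := by simpa [Metric.mem_ball] using hygx
    simp only [Set.mem_preimage, Metric.mem_ball]
    linarith
  have hV'n : V' ∈ nhds y := hV'open.mem_nhds hyV'
  obtain ⟨p, hp⟩ := hyF.2 V' hV'n
  rw [Set.univ_inter] at hp
  have hO : interior (g '' V') ⊆ g '' V' := interior_subset
  have hV'P : g '' V' ⊆ P := Set.image_mono (fun w hw => hw.1)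
  have hV'W : g '' V' ⊆ closure S := by
    rintro q ⟨w, hw, rfl⟩
    exact interior_subset (hballε hw.2)
  have hpcl : p ∈ closure S := hV'W (hO hp)
  obtain ⟨q, hqO, hqS⟩ := mem_closure_iff.mp hpcl _ isOpen_interior hp
  exact hqS.2 (hV'P (hO hqO))
end

section
/- Let X be a locally compact separable metric space, f : X → ℝ a continuous function, r ∈ ℕ, g : X → ℝ^r a continuous map, and c ∈ ℝ a real number that is not a local extremum of f restricted to the set fat_g X. Then for every open subset B ⊆ X and each a ∈ {0,1}, the set g(B ∩ U^∂(f,c)) \ g(B ∩ U^a(f,c)) is meagre in ℝ^r. -/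
open TopologicalSpace

lemma nowhereDense_isMeagre {Y : Type*} [TopologicalSpace Y] {s : Set Y}
    (hs : IsNowhereDense s) : IsMeagre s := by
  rw [isMeagre_iff_countable_union_isNowhereDense]
  exact ⟨{s}, by simpa using hs, Set.countable_singleton s, by simp⟩

lemma meagre_union {Y : Type*} [TopologicalSpace Y] {s t : Set Y}
    (hs : IsMeagre s) (ht : IsMeagre t) : IsMeagre (s ∪ t) := by
  rw [IsMeagre, Set.compl_union]
  exact Filter.inter_mem hs ht

/-- The image of the set of non-fat points is meagre. -/
lemma image_nonfat_meagre {X : Type*} [MetricSpace X]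
    [SeparableSpace X] [LocallyCompactSpace X] {r : ℕ}
    (g : X → EuclideanSpace ℝ (Fin r)) (hg : Continuous g) :
    IsMeagre (g '' (fatPoints g Set.univ)ᶜ) := by
  haveI : SecondCountableTopology X := UniformSpace.secondCountable_of_separable X
  set N : Set X := (fatPoints g Set.univ)ᶜ with hN
  -- for each x ∈ N, choose a compact neighbourhood with "thin" image
  have key : ∀ x ∈ N, ∃ K : Set X, K ∈ nhds x ∧ IsCompact K ∧ interior (g '' K) = ∅ := by
    intro x hx
    have : ¬ (∀ V ∈ nhds x, (interior (g '' (Set.univ ∩ V))).Nonempty) := by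
      intro h; exact hx ⟨Set.mem_univ x, h⟩
    push_neg at this
    obtain ⟨V, hV, hVint⟩ := this
    rw [Set.univ_inter] at hVint
    obtain ⟨K, hKn, hKV, hKc⟩ := local_compact_nhds hV
    refine ⟨K, hKn, hKc, ?_⟩
    have : interior (g '' K) ⊆ interior (g '' V) :=
      interior_mono (Set.image_mono (f := g) hKV)
    rw [hVint] at this
    exact Set.eq_empty_iff_forall_notMem.2 fun y hy => this hy
  classical
  choose! K hKn hKc hKi using key
  -- Lindelöf: countable subcover
  obtain ⟨t, htN, htc, htU⟩ := countable_cover_nhdsWithin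
    (s := N) (f := K) (fun x hx => mem_nhdsWithin_of_mem_nhds (hKn x hx))
  rw [isMeagre_iff_countable_union_isNowhereDense]
  refine ⟨(fun x => g '' K x) '' t, ?_, htc.image _, ?_⟩
  · rintro s ⟨x, hx, rfl⟩
    have hclosed : IsClosed (g '' K x) := ((hKc x (htN hx)).image hg).isClosed
    rw [hclosed.isNowhereDense_iff]
    exact hKi x (htN hx)
  · rintro y ⟨x, hx, rfl⟩
    obtain ⟨z, hzt, hzK⟩ := Set.mem_iUnion₂.1 (htU hx)
    exact Set.mem_sUnion.2 ⟨g '' K z, ⟨z, hzt, rfl⟩, ⟨x, hzK, rfl⟩⟩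

/-- If `c` is not a local extremum of `f` restricted to `fat_g X`, then for every open
`B ⊆ X` and each `a ∈ {0,1}`, the set `g(B ∩ U^∂(f,c)) \ g(B ∩ U^a(f,c))` is meagre
in `ℝ^r`. -/
theorem image_open_bd_diff_meagre (X : Type*) [MetricSpace X]
    [SeparableSpace X] [LocallyCompactSpace X]
    (f : X → ℝ) (hf : Continuous f) (r : ℕ)
    (g : X → EuclideanSpace ℝ (Fin r)) (hg : Continuous g) (c : ℝ)
    (hc : ¬ IsLocalExtremumOn f (fatPoints g Set.univ) c) :
    ∀ B : Set X, IsOpen B → ∀ a : Bool,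
      IsMeagre (g '' (B ∩ f ⁻¹' {c}) \ g '' (B ∩ Uset f c a)) := by
  intro B hB a
  set T : Set (EuclideanSpace ℝ (Fin r)) := g '' (B ∩ Uset f c a) with hT
  -- the non-extremum hypothesis: every open set meeting fat points at level c
  -- contains a fat point inside `Uset f c a`
  have hstep : ∀ V : Set X, IsOpen V → ∀ x ∈ V, x ∈ fatPoints g Set.univ → f x = c →
      ∃ y ∈ V, y ∈ fatPoints g Set.univ ∧ y ∈ Uset f c a := by
    intro V hV x hxV hxfat hxc
    have hcmem : c ∈ f '' (V ∩ fatPoints g Set.univ) := ⟨x, ⟨hxV, hxfat⟩, hxc⟩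
    cases a with
    | true =>
      have h1 : ¬ (∃ W : Set X, IsOpen W ∧ c ∈ f '' (W ∩ fatPoints g Set.univ) ∧
          ∀ y ∈ W ∩ fatPoints g Set.univ, f y ≤ c) := fun h => hc (Or.inl h)
      push_neg at h1
      obtain ⟨y, hy, hyc⟩ := h1 V hV hcmem
      exact ⟨y, hy.1, hy.2, hyc⟩
    | false =>
      have h1 : ¬ (∃ W : Set X, IsOpen W ∧ c ∈ f '' (W ∩ fatPoints g Set.univ) ∧
          ∀ y ∈ W ∩ fatPoints g Set.univ, c ≤ f y) := fun h => hc (Or.inr h)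
      push_neg at h1
      obtain ⟨y, hy, hyc⟩ := h1 V hV hcmem
      exact ⟨y, hy.1, hy.2, hyc⟩
  -- fat points of B ∩ f⁻¹{c} map into the closure of the interior of T
  have hfatcl : ∀ x ∈ B ∩ f ⁻¹' {c}, x ∈ fatPoints g Set.univ →
      g x ∈ closure (interior T) := by
    intro x hx hxfat
    rw [Metric.mem_closure_iff]
    intro ε hε
    set V : Set X := B ∩ g ⁻¹' (Metric.ball (g x) ε) with hV
    have hVopen : IsOpen V := hB.inter (Metric.isOpen_ball.preimage hg)
    have hxV : x ∈ V := ⟨hx.1, by simp [Metric.mem_ball, hε]⟩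
    obtain ⟨y, hyV, hyfat, hyU⟩ := hstep V hVopen x hxV hxfat hx.2
    -- y is fat, so the image of a small neighbourhood has nonempty interior
    have hWopen : IsOpen (V ∩ Uset f c a) := by
      cases a with
      | true => exact hVopen.inter (isOpen_lt continuous_const hf)
      | false => exact hVopen.inter (isOpen_lt hf continuous_const)
    have hWn : V ∩ Uset f c a ∈ nhds y := hWopen.mem_nhds ⟨hyV, hyU⟩
    obtain ⟨z, hz⟩ := hyfat.2 _ hWn
    rw [Set.univ_inter] at hz
    refine ⟨z, ?_, ?_⟩
    · have hsub : g '' (V ∩ Uset f c a) ⊆ T :=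
        Set.image_mono (f := g) fun w hw => ⟨hw.1.1, hw.2⟩
      exact interior_mono hsub hz
    · have hzT : z ∈ g '' (V ∩ Uset f c a) := interior_subset hz
      obtain ⟨w, hw, rfl⟩ := hzT
      have : g w ∈ Metric.ball (g x) ε := hw.1.2
      rwa [Metric.mem_ball, dist_comm] at this
  -- frontier of the open set `interior T` is nowhere dense
  have hfront : IsMeagre (closure (interior T) \ interior T) := by
    have h1 : IsClosed (closure (interior T)) := isClosed_closure
    have : IsNowhereDense (closure (interior T) \ interior T) := by
      rw [(h1.sdiff isOpen_interior).isNowhereDense_iff]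
      rw [Set.eq_empty_iff_forall_notMem]
      intro z hz
      have hz1 : z ∈ closure (interior T) \ interior T := interior_subset hz
      have hzo : interior (closure (interior T) \ interior T) ⊆ closure (interior T) :=
        interior_subset.trans Set.diff_subset
      -- z in an open set inside closure(interior T), so meets interior T
      have hmem : (interior (closure (interior T) \ interior T) ∩ interior T).Nonempty := by
        have hdense : ∀ U : Set (EuclideanSpace ℝ (Fin r)), IsOpen U → U.Nonempty →
            (U ⊆ closure (interior T)) → (U ∩ interior T).Nonempty := by
          intro U hU hUne hUsub
          obtain ⟨w, hw⟩ := hUne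
          have := hUsub hw
          rw [mem_closure_iff] at this
          exact this U hU hw
        exact hdense _ isOpen_interior ⟨z, hz⟩ hzo
      obtain ⟨w, hw1, hw2⟩ := hmem
      exact (interior_subset hw1).2 hw2
    exact nowhereDense_isMeagre this
  have hnonfat := image_nonfat_meagre g hg
  refine ((meagre_union hnonfat hfront).mono ?_)
  rintro z ⟨⟨x, hx, rfl⟩, hzT⟩
  by_cases hxfat : x ∈ fatPoints g Set.univ
  · right
    exact ⟨hfatcl x hx hxfat, fun h => hzT (interior_subset h)⟩
  · left
    exact ⟨x, hxfat, rfl⟩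
end

section
/- Let X be a locally compact separable metric space, f : X → ℝ a continuous function, r ∈ ℕ, g : X → ℝ^r a continuous map, and c ∈ ℝ a real number that is not a local extremum of f restricted to the set fat_g X. Then the set {p ∈ ℝ^r : c is a local extremum of f restricted to g⁻¹(p)} is meagre in ℝ^r. -/
open TopologicalSpace

section Aux

open Set Metric

variable {X : Type*} {r : ℕ}

/-- `c` is a local maximum of `f` restricted to `A`. -/
def LMOn [TopologicalSpace X] (f : X → ℝ) (A : Set X) (c : ℝ) : Prop :=
  ∃ V : Set X, IsOpen V ∧ c ∈ f '' (V ∩ A) ∧ ∀ y ∈ V ∩ A, f y ≤ c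

/-- A compact set whose image under `g` contains a nonempty open set contains a fat point. -/
lemma exists_fatPoint [TopologicalSpace X] [LocallyCompactSpace X]
    {g : X → EuclideanSpace ℝ (Fin r)}
    (hg : Continuous g) {T : Set X} (hT : IsCompact T)
    {O : Set (EuclideanSpace ℝ (Fin r))} (hO : IsOpen O) (hne : O.Nonempty)
    (hOT : O ⊆ g '' T) : ∃ x ∈ T, x ∈ fatPoints g Set.univ := by
  by_contra h
  push_neg at h
  have key : ∀ x ∈ T, ∃ C ∈ nhds x, IsCompact C ∧ interior (g '' C) = ∅ := by
    intro x hx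
    have hx' := h x hx
    simp only [fatPoints, Set.mem_setOf_eq, Set.mem_univ, true_and, not_forall,
      exists_prop] at hx'
    obtain ⟨V, hV, hVe⟩ := hx'
    obtain ⟨C, hC, hCV, hCc⟩ := local_compact_nhds hV
    refine ⟨C, hC, hCc, ?_⟩
    have : g '' C ⊆ g '' (univ ∩ V) := image_mono (by simpa using hCV)
    have := interior_mono this
    rw [not_nonempty_iff_eq_empty] at hVe
    rw [hVe] at this
    exact eq_empty_of_subset_empty this
  choose! C hCmem hCc hCe using key
  obtain ⟨t, htT, hcov⟩ := hT.elim_nhds_subcover C (fun x hx => hCmem x hx)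
  have hmeagre : IsMeagre (g '' T) := by
    rw [isMeagre_iff_countable_union_isNowhereDense]
    refine ⟨(fun x => g '' C x) '' t, ?_, (t.countable_toSet.image _), ?_⟩
    · rintro s ⟨x, hxt, rfl⟩
      have hclosed : IsClosed (g '' C x) := ((hCc x (htT x hxt)).image hg).isClosed
      rw [hclosed.isNowhereDense_iff]
      exact hCe x (htT x hxt)
    · intro q hq
      obtain ⟨x, hxT, rfl⟩ := hq
      obtain ⟨y, hyt, hy⟩ := by
        have := hcov hxT
        simpa using this
      exact ⟨g '' C y, ⟨y, hyt, rfl⟩, ⟨x, hy, rfl⟩⟩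
  have hdense : Dense (g '' T)ᶜ := dense_of_mem_residual hmeagre
  obtain ⟨q, hq1, hq2⟩ := hdense.inter_open_nonempty O hO hne
  exact hq2 (hOT hq1)

/-- The key lemma: the local-maximum version. -/
lemma key_max [MetricSpace X] [SeparableSpace X] [LocallyCompactSpace X]
    (f : X → ℝ) (hf : Continuous f)
    (g : X → EuclideanSpace ℝ (Fin r)) (hg : Continuous g) (c : ℝ)
    (hc : ¬ LMOn f (fatPoints g Set.univ) c) :
    IsMeagre {p : EuclideanSpace ℝ (Fin r) | LMOn f (g ⁻¹' {p}) c} := by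
  -- countable basis
  have : SecondCountableTopology X := UniformSpace.secondCountable_of_separable X
  obtain ⟨b, hbc, -, hb⟩ := exists_countable_basis X
  -- the building blocks
  set M : Set X → Set X → Set (EuclideanSpace ℝ (Fin r)) := fun U U' =>
    {p | IsCompact (closure U) ∧ closure U' ⊆ U ∧
      (∃ x ∈ closure U', f x = c ∧ g x = p) ∧
      ∀ y ∈ closure U, g y = p → f y ≤ c} with hM
  -- each block with U open is nowhere dense
  have claim : ∀ U U' : Set X, IsOpen U → IsNowhereDense (M U U') := by
    intro U U' hUopen
    rw [IsNowhereDense]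
    by_contra hcon
    obtain ⟨p₀, hp₀⟩ := Set.nonempty_iff_ne_empty.mpr hcon
    obtain ⟨ε, hε, hball⟩ := Metric.isOpen_iff.mp isOpen_interior p₀ hp₀
    have hballcl : ball p₀ ε ⊆ closure (M U U') := hball.trans interior_subset
    -- some element of M U U'
    obtain ⟨q₀, -, hq₀M⟩ := (_root_.mem_closure_iff.mp (hballcl (mem_ball_self hε)))
      (ball p₀ ε) isOpen_ball (mem_ball_self hε)
    obtain ⟨hcomp, hsub, -, -⟩ := hq₀M
    -- compact set of witnesses
    set T : Set X := closure U' ∩ f ⁻¹' {c} ∩ g ⁻¹' (closedBall p₀ (ε / 2)) with hT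
    have hclU'comp : IsCompact (closure U') :=
      hcomp.of_isClosed_subset isClosed_closure (hsub.trans subset_closure)
    have hTcomp : IsCompact T :=
      ((hclU'comp.inter_right (isClosed_singleton.preimage hf)).inter_right
        (Metric.isClosed_closedBall.preimage hg))
    have hcover : ball p₀ (ε / 2) ⊆ g '' T := by
      have h1 : M U U' ∩ ball p₀ (ε / 2) ⊆ g '' T := by
        rintro q ⟨⟨-, -, ⟨x, hx, hfx, hgx⟩, -⟩, hqb⟩
        exact ⟨x, ⟨⟨hx, hfx⟩, by
          simp only [Set.mem_preimage, hgx]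
          exact ball_subset_closedBall hqb⟩, hgx⟩
      have h2 : ball p₀ (ε / 2) ⊆ closure (M U U') :=
        (ball_subset_ball (by linarith)).trans hballcl
      have h3 : ball p₀ (ε / 2) ⊆ closure (ball p₀ (ε / 2) ∩ M U U') := by
        intro q hq
        exact isOpen_ball.inter_closure ⟨hq, h2 hq⟩
      refine h3.trans ?_
      refine (closure_mono (fun q hq => h1 ⟨hq.2, hq.1⟩)).trans ?_
      rw [IsClosed.closure_eq (hTcomp.image hg).isClosed]
    obtain ⟨x₀, hx₀T, hx₀fat⟩ := exists_fatPoint hg hTcomp isOpen_ball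
      (nonempty_ball.mpr (by linarith)) hcover
    -- contradiction with hc
    apply hc
    refine ⟨U ∩ g ⁻¹' (ball p₀ ε), hUopen.inter (isOpen_ball.preimage hg), ?_, ?_⟩
    · refine ⟨x₀, ⟨⟨hsub hx₀T.1.1, ?_⟩, hx₀fat⟩, hx₀T.1.2⟩
      exact closedBall_subset_ball (by linarith) hx₀T.2
    · rintro y ⟨⟨hyU, hyball⟩, hyfat⟩
      by_contra hlt
      push_neg at hlt
      have hV'' : (U ∩ g ⁻¹' (ball p₀ ε)) ∩ f ⁻¹' (Set.Ioi c) ∈ nhds y :=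
        (((hUopen.inter (isOpen_ball.preimage hg)).inter
          (isOpen_Ioi.preimage hf)).mem_nhds ⟨⟨hyU, hyball⟩, hlt⟩)
      obtain ⟨q', hq'⟩ := hyfat.2 _ hV''
      have hO'sub : interior (g '' (Set.univ ∩ ((U ∩ g ⁻¹' (ball p₀ ε)) ∩ f ⁻¹' (Set.Ioi c))))
          ⊆ closure (M U U') := by
        refine interior_subset.trans ?_
        rintro q ⟨x, ⟨-, ⟨-, hxball⟩, -⟩, rfl⟩
        exact hballcl hxball
      obtain ⟨q'', hq''O, hq''M⟩ := _root_.mem_closure_iff.mp (hO'sub hq') _ isOpen_interior hq'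
      obtain ⟨x₁, ⟨-, ⟨hx₁U, -⟩, hx₁gt⟩, hgx₁⟩ := interior_subset hq''O
      have := hq''M.2.2.2 x₁ (subset_closure hx₁U) hgx₁
      exact absurd this (not_le.mpr hx₁gt)
  -- covering
  have hcov : {p : EuclideanSpace ℝ (Fin r) | LMOn f (g ⁻¹' {p}) c} ⊆
      ⋃₀ ((fun q : Set X × Set X => M q.1 q.2) '' (b ×ˢ b)) := by
    rintro p ⟨V, hVopen, ⟨x, ⟨hxV, hgx⟩, hfx⟩, hbd⟩
    rw [Set.mem_preimage, Set.mem_singleton_iff] at hgx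
    obtain ⟨K, hKc, hxint, hKV⟩ := exists_compact_subset hVopen hxV
    obtain ⟨U, hUb, hxU, hUK⟩ := hb.exists_subset_of_mem_open hxint isOpen_interior
    have hclU : closure U ⊆ K := by
      calc closure U ⊆ closure (interior K) := closure_mono hUK
        _ ⊆ closure K := closure_mono interior_subset
        _ = K := hKc.isClosed.closure_eq
    obtain ⟨t, htnhds, htclosed, htU⟩ :=
      exists_mem_nhds_isClosed_subset ((hb.isOpen hUb).mem_nhds hxU)
    obtain ⟨U', hU'b, hxU', hU't⟩ := hb.exists_subset_of_mem_open
      (mem_interior_iff_mem_nhds.mpr htnhds) isOpen_interior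
    have hclU' : closure U' ⊆ U := by
      calc closure U' ⊆ closure (interior t) := closure_mono hU't
        _ ⊆ closure t := closure_mono interior_subset
        _ = t := htclosed.closure_eq
        _ ⊆ U := htU
    refine ⟨M U U', ⟨(U, U'), ⟨hUb, hU'b⟩, rfl⟩, ?_⟩
    refine ⟨hKc.of_isClosed_subset isClosed_closure hclU, hclU',
      ⟨x, subset_closure hxU', hfx, hgx⟩, ?_⟩
    intro y hy hgy
    exact hbd y ⟨hKV (hclU hy), by simp [hgy]⟩
  -- assemble
  refine IsMeagre.mono hcov ?_
  rw [isMeagre_iff_countable_union_isNowhereDense]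
  refine ⟨_, ?_, (hbc.prod hbc).image _, subset_rfl⟩
  rintro s ⟨⟨U, U'⟩, ⟨hU, hU'⟩, rfl⟩
  exact claim U U' (hb.isOpen hU)

end Aux

/-- If `c` is not a local extremum of `f` restricted to `fat_g X`, then the set of
`p ∈ ℝ^r` such that `c` is a local extremum of `f` restricted to `g⁻¹(p)` is meagre. -/
theorem meagre_localExtremum_fibres (X : Type*) [MetricSpace X]
    [SeparableSpace X] [LocallyCompactSpace X]
    (f : X → ℝ) (hf : Continuous f) (r : ℕ)
    (g : X → EuclideanSpace ℝ (Fin r)) (hg : Continuous g) (c : ℝ)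
    (hc : ¬ IsLocalExtremumOn f (fatPoints g Set.univ) c) :
    IsMeagre {p : EuclideanSpace ℝ (Fin r) | IsLocalExtremumOn f (g ⁻¹' {p}) c} := by
  have hmax : ¬ LMOn f (fatPoints g Set.univ) c := fun h => hc (Or.inl h)
  have hmin : ¬ LMOn (-f) (fatPoints g Set.univ) (-c) := by
    rintro ⟨V, hV, ⟨x, hx, hfx⟩, hbd⟩
    refine hc (Or.inr ⟨V, hV, ⟨x, hx, by simpa using congrArg Neg.neg hfx⟩, fun y hy => ?_⟩)
    have := hbd y hy
    simp only [Pi.neg_apply] at this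
    linarith
  have hA := key_max f hf g hg c hmax
  have hB := key_max (-f) hf.neg g hg (-c) hmin
  have hunion : IsMeagre (⋃ n : ℕ,
      if n = 0 then {p : EuclideanSpace ℝ (Fin r) | LMOn f (g ⁻¹' {p}) c}
      else {p : EuclideanSpace ℝ (Fin r) | LMOn (-f) (g ⁻¹' {p}) (-c)}) :=
    isMeagre_iUnion (fun n => by split <;> assumption)
  refine hunion.mono ?_
  intro p hp
  rcases hp with hp | hp
  · refine Set.mem_iUnion.mpr ⟨0, ?_⟩
    rw [if_pos rfl]
    exact hp
  · refine Set.mem_iUnion.mpr ⟨1, ?_⟩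
    rw [if_neg one_ne_zero]
    obtain ⟨V, hV, ⟨x, hx, hfx⟩, hbd⟩ := hp
    refine ⟨V, hV, ⟨x, hx, by simpa using congrArg Neg.neg hfx⟩, fun y hy => ?_⟩
    have := hbd y hy
    simp only [Pi.neg_apply]
    linarith
end
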